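/- For every continuous antisymmetric function g on the unit circle S¹, there exists a rotation R and a linear function ℓ on ℝ² such that g ∘ R agrees with ℓ on the six sixth roots of unity. -/

import Mathlib

open RealInnerProductSpace Real

/-- The unit vector at angle `a` in the Euclidean plane. -/
noncomputable def unitVec (a : ℝ) : EuclideanSpace ℝ (Fin 2) := WithLp.toLp 2 ![Real.cos a, Real.sin a]

lemma inner_unitVec (a b : ℝ) : ⟪unitVec a, unitVec b⟫ = Real.cos (a - b) := by
  simp [unitVec, PiLp.inner_apply, Fin.sum_univ_two, Real.cos_sub]
  ring

lemma norm_unitVec (a : ℝ) : ‖unitVec a‖ = 1 := by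
  rw [EuclideanSpace.norm_eq]
  simp [unitVec, Fin.sum_univ_two]

lemma unitVec_add_pi (a : ℝ) : unitVec (a + π) = -unitVec a := by
  unfold unitVec
  ext i
  fin_cases i <;> simp [Real.cos_add, Real.sin_add]

lemma continuous_unitVec : Continuous unitVec := by
  show Continuous fun a : ℝ => WithLp.toLp 2 ![Real.cos a, Real.sin a]
  apply (PiLp.continuous_toLp 2 _).comp
  apply continuous_pi
  intro i
  fin_cases i <;> simp [unitVec] <;> fun_prop

lemma cos_2pi3 : Real.cos (2*π/3) = -(1/2) := by
  rw [show (2*π/3) = π - π/3 by ring, Real.cos_pi_sub, Real.cos_pi_div_three]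

lemma cos_4pi3 : Real.cos (4*π/3) = -(1/2) := by
  rw [show (4*π/3) = π/3 + π by ring, Real.cos_add_pi, Real.cos_pi_div_three]

/-- For every continuous antisymmetric function `g` on the unit circle there is a
rotation (by an angle `θ`) and a linear function `⟪c, ·⟫` agreeing with `g` at the
rotated images of the six sixth roots of unity. -/
theorem antisymmetric_agrees_linear_on_hexagon
    (g : EuclideanSpace ℝ (Fin 2) → ℝ)
    (hg : ContinuousOn g (Metric.sphere (0 : EuclideanSpace ℝ (Fin 2)) 1))
    (hanti : ∀ v : EuclideanSpace ℝ (Fin 2), ‖v‖ = 1 → g (-v) = -g v) :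
    ∃ (θ : ℝ) (c : EuclideanSpace ℝ (Fin 2)),
      ∀ k : Fin 6, g (unitVec (θ + k * (π / 3))) = ⟪c, unitVec (θ + k * (π / 3))⟫ := by
  -- the function whose zero gives the compatibility condition
  set h : ℝ → ℝ := fun θ => g (unitVec θ) - g (unitVec (θ + π/3)) + g (unitVec (θ + 2*π/3)) with hh
  have hmem : ∀ a : ℝ, unitVec a ∈ Metric.sphere (0 : EuclideanSpace ℝ (Fin 2)) 1 := by
    intro a; simp [mem_sphere_iff_norm, norm_unitVec]
  have hgu : Continuous (fun a : ℝ => g (unitVec a)) :=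
    hg.comp_continuous continuous_unitVec hmem
  have hcont : Continuous h := by
    apply Continuous.add
    · exact hgu.sub (hgu.comp (by continuity))
    · exact hgu.comp (by continuity)
  have hganti : ∀ a : ℝ, g (unitVec (a + π)) = - g (unitVec a) := by
    intro a
    rw [unitVec_add_pi]
    exact hanti _ (norm_unitVec a)
  have hflip : h (π/3) = - h 0 := by
    simp only [hh]
    rw [show π/3 + π/3 = 2*π/3 by ring, show π/3 + 2*π/3 = 0 + π by ring]
    rw [hganti]
    ring
  -- IVT
  have h0 : (0:ℝ) ∈ Set.uIcc (h 0) (h (π/3)) := by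
    rw [hflip, Set.mem_uIcc]
    rcases le_total (h 0) 0 with h' | h'
    · left; constructor <;> linarith
    · right; constructor <;> linarith
  obtain ⟨θ, -, hθ⟩ := intermediate_value_uIcc (a := (0:ℝ)) (b := π/3) hcont.continuousOn h0
  set a := g (unitVec θ) with ha
  set b := g (unitVec (θ + π/3)) with hb
  have hc2 : g (unitVec (θ + 2*π/3)) = b - a := by
    have : a - b + g (unitVec (θ + 2*π/3)) = 0 := hθ
    linarith
  refine ⟨θ, ((4*a - 2*b)/3) • unitVec θ + ((4*b - 2*a)/3) • unitVec (θ + π/3), ?_⟩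
  have hin : ∀ x : ℝ, ⟪((4*a - 2*b)/3) • unitVec θ + ((4*b - 2*a)/3) • unitVec (θ + π/3), unitVec x⟫
      = (4*a - 2*b)/3 * Real.cos (θ - x) + (4*b - 2*a)/3 * Real.cos (θ + π/3 - x) := by
    intro x
    rw [inner_add_left, real_inner_smul_left, real_inner_smul_left, inner_unitVec, inner_unitVec]
  intro k
  fin_cases k <;> rw [hin] <;>
    simp only [Fin.val_zero, Fin.val_one, Fin.isValue, Fin.val_two] <;>
    push_cast
  · -- k = 0
    rw [show θ - (θ + 0 * (π/3)) = 0 by ring, show θ + π/3 - (θ + 0 * (π/3)) = π/3 by ring,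
      Real.cos_zero, Real.cos_pi_div_three, show θ + 0 * (π/3) = θ by ring]
    ring
  · rw [show θ - (θ + 1 * (π/3)) = -(π/3) by ring, show θ + π/3 - (θ + 1 * (π/3)) = 0 by ring,
      Real.cos_neg, Real.cos_zero, Real.cos_pi_div_three, show θ + 1 * (π/3) = θ + π/3 by ring]
    ring
  · rw [show θ - (θ + 2 * (π/3)) = -(2*π/3) by ring, show θ + π/3 - (θ + 2 * (π/3)) = -(π/3) by ring,
      Real.cos_neg, Real.cos_neg, cos_2pi3, Real.cos_pi_div_three,
      show θ + 2 * (π/3) = θ + 2*π/3 by ring, hc2]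
    ring
  · rw [show θ - (θ + 3 * (π/3)) = -π by ring, show θ + π/3 - (θ + 3 * (π/3)) = -(2*π/3) by ring,
      Real.cos_neg, Real.cos_neg, Real.cos_pi, cos_2pi3,
      show θ + 3 * (π/3) = θ + π by ring, hganti]
    ring
  · rw [show θ - (θ + 4 * (π/3)) = -(4*π/3) by ring, show θ + π/3 - (θ + 4 * (π/3)) = -π by ring,
      Real.cos_neg, Real.cos_neg, Real.cos_pi, cos_4pi3,
      show θ + 4 * (π/3) = (θ + π/3) + π by ring, hganti]
    ring
  · rw [show θ - (θ + 5 * (π/3)) = -(4*π/3) - π/3 by ring,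
      show θ + π/3 - (θ + 5 * (π/3)) = -(4*π/3) by ring]
    rw [show -(4*π/3) - π/3 = -(π + 2*π/3) by ring, Real.cos_neg, show π + 2*π/3 = 2*π/3 + π by ring,
      Real.cos_add_pi, cos_2pi3, Real.cos_neg, cos_4pi3,
      show θ + 5 * (π/3) = (θ + 2*π/3) + π by ring, hganti, hc2]
    ring
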